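/- arXiv:1901.06853 — 2 statements merged into one kernel-verified Lean document; each statement's English description precedes it below -/
import Mathlib

section
/- The extended Schubert derivations σ_+(z) and σ̄_+(z) on each charge-m Fock space F_m are mutually inverse: σ̄_+(z)σ_+(z) = id on F_m (as elements of End(F_m)[[z]]); similarly σ̄_-(z)σ_-(z) = id on F_m. -/
open ExteriorAlgebra

noncomputable section

/-- `M = ⊕_{i∈ℤ} ℤ bᵢ`. -/
abbrev M : Type := ℤ →₀ ℤ
def b (i : ℤ) : M := Finsupp.single i 1
abbrev A : Type := ExteriorAlgebra ℤ M

/-- `[M]`, the free ℤ-module on the symbols `[b]_m`, `m ∈ ℤ`. -/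
abbrev V : Type := ℤ →₀ ℤ
def v (m : ℤ) : V := Finsupp.single m 1

/-- The `⋀M`-submodule of relations: generated by `b_m ⊗ [b]_{m−1} − 1 ⊗ [b]_m`
and `b_m ⊗ [b]_m`. -/
def W : Submodule A (TensorProduct ℤ A V) :=
  Submodule.span A {x | ∃ m : ℤ,
    x = (ι ℤ (b m)) ⊗ₜ[ℤ] v (m - 1) - (1 : A) ⊗ₜ[ℤ] v m ∨ x = (ι ℤ (b m)) ⊗ₜ[ℤ] v m}

/-- The fermionic Fock space `F = (⋀M ⊗ [M]) / W`; the class of `u ⊗ [b]_m`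
is the wedge `u ∧ [b]_m`, realized as the scalar action `u • -` of `⋀M`. -/
abbrev F : Type := TensorProduct ℤ A V ⧸ W

/-- `[b]_m ∈ F`. -/
def bb (m : ℤ) : F := Submodule.Quotient.mk ((1 : A) ⊗ₜ[ℤ] v m)

/-- `b^r_{m+λ} = b_{m+λ₁} ∧ b_{m−1+λ₂} ∧ ⋯ ∧ b_{m−r+1+λ_r} ∈ ⋀^r M` (0-indexed `λ`). -/
def wb (m : ℤ) (r : ℕ) (lam : Fin r → ℕ) : A :=
  (List.ofFn fun k : Fin r => ι ℤ (b (m - ((k : ℕ) : ℤ) + ((lam k : ℕ) : ℤ)))).prod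

/-- `[b]_{m+λ} = b^r_{m+λ} ∧ [b]_{m−r} ∈ F`. -/
def bbp (m : ℤ) (r : ℕ) (lam : Fin r → ℕ) : F := wb m r lam • bb (m - r)

/-- The charge-`n` Fock space `F_n = ⊕_{λ∈𝒫} ℤ·[b]_{n+λ}`. -/
def Fm (n : ℤ) : Submodule ℤ F :=
  Submodule.span ℤ {x | ∃ (r : ℕ) (lam : Fin r → ℕ), Antitone lam ∧ x = bbp n r lam}

/-- Hasse–Schmidt derivation on `⋀M`, coefficientwise. -/
def IsHS (D : ℕ → Module.End ℤ A) : Prop :=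
  ∀ (n : ℕ) (u w : A), D n (u * w) = ∑ j ∈ Finset.range (n + 1), D j u * D (n - j) w

/-- `cF` extends `cA` multiplicatively from `⋀M` to the Fock space `F`:
`D(z)(u ∧ f) = D(z)u ∧ D(z)f`, coefficientwise. -/
def MultOver (cA : ℕ → Module.End ℤ A) (cF : ℕ → Module.End ℤ F) : Prop :=
  ∀ (n : ℕ) (u : A) (f : F), cF n (u • f) = ∑ j ∈ Finset.range (n + 1), cA j u • cF (n - j) f

def IsSigmaPlus (c : ℕ → Module.End ℤ A) : Prop :=
  IsHS c ∧ c 0 = 1 ∧ ∀ (n : ℕ) (j : ℤ), c n (ι ℤ (b j)) = ι ℤ (b (j + n))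

def IsSigmaMinus (c : ℕ → Module.End ℤ A) : Prop :=
  IsHS c ∧ c 0 = 1 ∧ ∀ (n : ℕ) (j : ℤ), c n (ι ℤ (b j)) = ι ℤ (b (j - n))

def IsSigmaBarPlus (c : ℕ → Module.End ℤ A) : Prop :=
  IsHS c ∧ c 0 = 1 ∧ (∀ j : ℤ, c 1 (ι ℤ (b j)) = -(ι ℤ (b (j + 1)))) ∧
    ∀ n : ℕ, 2 ≤ n → ∀ j : ℤ, c n (ι ℤ (b j)) = 0

def IsSigmaBarMinus (c : ℕ → Module.End ℤ A) : Prop :=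
  IsHS c ∧ c 0 = 1 ∧ (∀ j : ℤ, c 1 (ι ℤ (b j)) = -(ι ℤ (b (j - 1)))) ∧
    ∀ n : ℕ, 2 ≤ n → ∀ j : ℤ, c n (ι ℤ (b j)) = 0


/-! ### Auxiliary lemmas -/

private lemma quad {N : Type} [AddCommMonoid N] (n : ℕ) (g : ℕ → ℕ → ℕ → ℕ → N) :
    ∑ j ∈ Finset.range (n+1), ∑ i ∈ Finset.range (n-j+1), ∑ l ∈ Finset.range (j+1),
      g l i (j-l) (n-j-i)
    = ∑ a ∈ Finset.range (n+1), ∑ l ∈ Finset.range (a+1), ∑ p ∈ Finset.range (n-a+1),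
      g l (a-l) p (n-a-p) := by
  simp only [Finset.sum_sigma']
  refine Finset.sum_nbij' (fun x => ⟨x.2.2 + x.2.1, x.2.2, x.1 - x.2.2⟩)
    (fun y => ⟨y.2.1 + y.2.2, y.1 - y.2.1, y.2.1⟩) ?_ ?_ ?_ ?_ ?_
  · rintro ⟨j, i, l⟩ h
    simp only [Finset.mem_sigma, Finset.mem_range] at h ⊢
    omega
  · rintro ⟨a, l, p⟩ h
    simp only [Finset.mem_sigma, Finset.mem_range] at h ⊢
    omega
  · rintro ⟨j, i, l⟩ h
    simp only [Finset.mem_sigma, Finset.mem_range] at h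
    simp only [Sigma.mk.inj_iff, heq_eq_eq]
    refine ⟨by omega, ?_⟩
    exact ⟨by omega, trivial⟩
  · rintro ⟨a, l, p⟩ h
    simp only [Finset.mem_sigma, Finset.mem_range] at h
    simp only [Sigma.mk.inj_iff, heq_eq_eq]
    refine ⟨by omega, ?_⟩
    exact ⟨trivial, by omega⟩
  · rintro ⟨j, i, l⟩ h
    simp only [Finset.mem_sigma, Finset.mem_range] at h
    dsimp only
    rw [show l + i - l = i by omega, show n - (l + i) - (j - l) = n - j - i by omega]

private lemma hs_one {c : ℕ → Module.End ℤ A} (hc : IsHS c) (h0 : c 0 = 1) :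
    ∀ n : ℕ, 1 ≤ n → c n (1 : A) = 0 := by
  intro n
  induction n using Nat.strong_induction_on with
  | _ n ih =>
    intro hn
    obtain ⟨m, rfl⟩ : ∃ m, n = m + 1 := ⟨n - 1, by omega⟩
    have h := hc (m+1) 1 1
    rw [mul_one, Finset.sum_range_succ, Finset.sum_range_succ'] at h
    have hz : ∀ j ∈ Finset.range m, c (j+1) (1:A) * c (m+1-(j+1)) (1:A) = 0 := by
      intro j hj
      rw [ih (j+1) (by simp only [Finset.mem_range] at hj; omega) (by omega), zero_mul]
    rw [Finset.sum_eq_zero hz, zero_add] at h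
    simp only [Nat.sub_self, Nat.sub_zero, h0, Module.End.one_apply, one_mul, mul_one] at h
    exact add_left_cancel (show c (m+1) (1:A) + c (m+1) (1:A) = c (m+1) (1:A) + 0 by
      rw [add_zero]; exact h.symm)

/-- Composite of two HS families with trivial composite on generators and on `1`
kills everything in positive degree. -/
private lemma comp_vanish {c d : ℕ → Module.End ℤ A} (hc : IsHS c) (hd : IsHS d)
    (hc0 : c 0 = 1) (hd0 : d 0 = 1)
    (hgen : ∀ n : ℕ, 1 ≤ n → ∀ i : ℤ,
      ∑ j ∈ Finset.range (n+1), d j (c (n-j) (ι ℤ (b i))) = 0) :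
    ∀ (u : A) (n : ℕ), 1 ≤ n → ∑ j ∈ Finset.range (n+1), d j (c (n-j) u) = 0 := by
  have hc1 := hs_one hc hc0
  have hd1 := hs_one hd hd0
  have hone : ∀ n : ℕ, 1 ≤ n → ∑ j ∈ Finset.range (n+1), d j (c (n-j) (1:A)) = 0 := by
    intro n hn
    refine Finset.sum_eq_zero fun j hj => ?_
    simp only [Finset.mem_range] at hj
    by_cases h : j = n
    · subst h
      rw [Nat.sub_self]
      have : c 0 (1:A) = 1 := by rw [hc0]; rfl
      rw [this, hd1 _ hn]
    · rw [hc1 (n-j) (by omega), map_zero]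
  intro u
  induction u using ExteriorAlgebra.induction with
  | algebraMap r =>
    intro n hn
    have : (algebraMap ℤ A) r = r • (1:A) := Algebra.algebraMap_eq_smul_one r
    rw [this]
    calc ∑ j ∈ Finset.range (n+1), d j (c (n-j) (r • (1:A)))
        = r • ∑ j ∈ Finset.range (n+1), d j (c (n-j) (1:A)) := by
          rw [Finset.smul_sum]
          exact Finset.sum_congr rfl fun j _ => by rw [map_smul, map_smul]
      _ = 0 := by rw [hone n hn, smul_zero]
  | ι x =>
    induction x using Finsupp.induction_linear with
    | zero =>
      intro n hn
      simp only [map_zero]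
      exact Finset.sum_eq_zero fun j _ => rfl
    | add p q hp hq =>
      intro n hn
      simp only [map_add]
      rw [Finset.sum_add_distrib, hp n hn, hq n hn, add_zero]
    | single i a =>
      intro n hn
      have hba : Finsupp.single i a = a • b i := by
        rw [b, Finsupp.smul_single, smul_eq_mul, mul_one]
      rw [hba]
      calc ∑ j ∈ Finset.range (n+1), d j (c (n-j) (ι ℤ (a • b i)))
          = a • ∑ j ∈ Finset.range (n+1), d j (c (n-j) (ι ℤ (b i))) := by
            rw [Finset.smul_sum]
            exact Finset.sum_congr rfl fun j _ => by rw [map_smul, map_smul, map_smul]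
        _ = 0 := by rw [hgen n hn i, smul_zero]
  | mul u w hu hw =>
    intro n hn
    have expand : ∑ j ∈ Finset.range (n+1), d j (c (n-j) (u * w))
        = ∑ a ∈ Finset.range (n+1),
            (∑ l ∈ Finset.range (a+1), d l (c (a-l) u)) *
            (∑ p ∈ Finset.range (n-a+1), d p (c (n-a-p) w)) := by
      have step : ∀ j ∈ Finset.range (n+1), d j (c (n-j) (u * w))
          = ∑ i ∈ Finset.range (n-j+1), ∑ l ∈ Finset.range (j+1),
              d l (c i u) * d (j-l) (c (n-j-i) w) := by
        intro j _
        rw [hc (n-j) u w, map_sum]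
        exact Finset.sum_congr rfl fun i _ => hd j (c i u) (c (n-j-i) w)
      rw [Finset.sum_congr rfl step,
        quad n (fun l i p q => d l (c i u) * d p (c q w))]
      refine Finset.sum_congr rfl fun a _ => ?_
      rw [Finset.sum_mul_sum]
    rw [expand]
    refine Finset.sum_eq_zero fun a ha => ?_
    simp only [Finset.mem_range] at ha
    by_cases h : a = 0
    · subst h
      simp only [Nat.sub_zero]
      rw [hw n hn, mul_zero]
    · rw [hu a (by omega), zero_mul]
  | add u w hu hw =>
    intro n hn
    simp only [map_add]
    rw [Finset.sum_add_distrib, hu n hn, hw n hn, add_zero]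

private lemma multover_comp {cA dA : ℕ → Module.End ℤ A} {cF dF : ℕ → Module.End ℤ F}
    (h₁ : MultOver cA cF) (h₂ : MultOver dA dF)
    (hvan : ∀ (u : A) (n : ℕ), 1 ≤ n → ∑ j ∈ Finset.range (n+1), dA j (cA (n-j) u) = 0)
    (hc0 : cA 0 = 1) (hd0 : dA 0 = 1)
    (u : A) (f : F) (n : ℕ) :
    ∑ j ∈ Finset.range (n+1), dF j (cF (n-j) (u • f))
      = u • ∑ j ∈ Finset.range (n+1), dF j (cF (n-j) f) := by
  have step : ∀ j ∈ Finset.range (n+1), dF j (cF (n-j) (u • f)) =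
      ∑ i ∈ Finset.range (n-j+1), ∑ l ∈ Finset.range (j+1),
        dA l (cA i u) • dF (j-l) (cF (n-j-i) f) := by
    intro j _
    rw [h₁ (n-j) u f, map_sum]
    exact Finset.sum_congr rfl fun i _ => h₂ j (cA i u) (cF (n-j-i) f)
  rw [Finset.sum_congr rfl step,
    quad n (fun l i p q => dA l (cA i u) • dF p (cF q f))]
  have step2 : ∀ a ∈ Finset.range (n+1),
      (∑ l ∈ Finset.range (a+1), ∑ p ∈ Finset.range (n-a+1),
        dA l (cA (a-l) u) • dF p (cF (n-a-p) f))
      = (∑ l ∈ Finset.range (a+1), dA l (cA (a-l) u)) •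
        (∑ p ∈ Finset.range (n-a+1), dF p (cF (n-a-p) f)) := by
    intro a _
    rw [Finset.sum_smul]
    exact Finset.sum_congr rfl fun l _ => (Finset.smul_sum).symm
  rw [Finset.sum_congr rfl step2, Finset.sum_range_succ']
  have hz : ∀ a ∈ Finset.range n,
      (∑ l ∈ Finset.range (a+1+1), dA l (cA (a+1-l) u)) •
        (∑ p ∈ Finset.range (n-(a+1)+1), dF p (cF (n-(a+1)-p) f)) = 0 := by
    intro a _
    rw [hvan u (a+1) (by omega), zero_smul]
  rw [Finset.sum_eq_zero hz, zero_add]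
  have : dA 0 (cA 0 u) = u := by rw [hc0, hd0]; rfl
  simp only [Nat.sub_zero, Finset.sum_range_one, Nat.sub_self, this, zero_add]

private lemma rel_smul (k : ℤ) : (ι ℤ (b k)) • bb (k-1) = bb k := by
  have h : ((ι ℤ (b k)) ⊗ₜ[ℤ] v (k-1) - (1:A) ⊗ₜ[ℤ] v k) ∈ W :=
    Submodule.subset_span ⟨k, Or.inl rfl⟩
  show (ι ℤ (b k)) • Submodule.Quotient.mk ((1:A) ⊗ₜ[ℤ] v (k-1)) = bb k
  rw [← Submodule.Quotient.mk_smul W]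
  refine (Submodule.Quotient.eq W).mpr ?_
  simpa [TensorProduct.smul_tmul', smul_eq_mul, mul_one] using h

/-- Action of a "bar" family on `ι x • f`. -/
private lemma bar_smul {dA : ℕ → Module.End ℤ A} {dF : ℕ → Module.End ℤ F}
    (h₂ : MultOver dA dF) (hd0 : dA 0 = 1)
    (x y : M) (h1 : dA 1 (ι ℤ x) = -(ι ℤ y))
    (h2 : ∀ n, 2 ≤ n → dA n (ι ℤ x) = 0) (f : F) :
    ∀ j : ℕ, dF j (ι ℤ x • f) =
      ι ℤ x • dF j f - (if j = 0 then 0 else ι ℤ y • dF (j-1) f) := by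
  intro j
  rw [h₂ j (ι ℤ x) f]
  cases j with
  | zero =>
    simp [hd0]
  | succ m =>
    rw [Finset.sum_range_succ', Finset.sum_range_succ']
    have hz : ∀ i ∈ Finset.range m, dA (i+1+1) (ι ℤ x) • dF (m+1-(i+1+1)) f = 0 := by
      intro i _
      rw [h2 _ (by omega), zero_smul]
    rw [Finset.sum_eq_zero hz, zero_add, h1, hd0]
    simp only [Module.End.one_apply, Nat.sub_zero, neg_smul, zero_add,
      Nat.add_sub_cancel, Nat.succ_sub_one, if_neg (Nat.succ_ne_zero m)]
    abel

/-- The key computation: `σ̄₊σ₊` is the identity on the vacuum vectors `[b]_k`. -/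
private lemma plus_bb {sA sbA : ℕ → Module.End ℤ A} {sF sbF : ℕ → Module.End ℤ F}
    (hsA : IsSigmaPlus sA) (hsbA : IsSigmaBarPlus sbA)
    (h₂ : MultOver sbA sbF)
    (hsF : ∀ (n : ℕ) (k : ℤ), sF n (bb k) = ι ℤ (b (k + n)) • bb (k - 1))
    (hsbF : ∀ (n : ℕ) (k : ℤ), sbF n (bb k) = ((-1 : ℤ) ^ n) • bbp k n fun _ => 1)
    (k : ℤ) (n : ℕ) :
    ∑ j ∈ Finset.range (n+1), sbF j (sF (n-j) (bb k)) = if n = 0 then bb k else 0 := by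
  set G : ℕ → F := fun j => ι ℤ (b (k + ((n-j : ℕ) : ℤ))) • sbF j (bb (k-1)) with hG
  have main : ∑ j ∈ Finset.range (n+1), sbF j (sF (n-j) (bb k)) = G n := by
    have step : ∀ j ∈ Finset.range (n+1), sbF j (sF (n-j) (bb k))
        = G j - (if j = 0 then 0 else G (j-1)) := by
      intro j hj
      simp only [Finset.mem_range] at hj
      rw [hsF (n-j) k,
        bar_smul h₂ hsbA.2.1 _ _ (hsbA.2.2.1 (k + ((n-j : ℕ) : ℤ)))
          (fun n' hn' => hsbA.2.2.2 n' hn' (k + ((n-j : ℕ) : ℤ))) (bb (k-1)) j]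
      by_cases hj0 : j = 0
      · subst hj0; rfl
      · rw [if_neg hj0, if_neg hj0, hG]
        have : k + ((n-j : ℕ) : ℤ) + 1 = k + ((n-(j-1) : ℕ) : ℤ) := by omega
        rw [this]
    rw [Finset.sum_congr rfl step, Finset.sum_sub_distrib]
    have e1 : ∑ j ∈ Finset.range (n+1), (if j = 0 then (0:F) else G (j-1))
        = ∑ j ∈ Finset.range n, G j := by
      rw [Finset.sum_range_succ']
      simp
    rw [e1, Finset.sum_range_succ]
    abel
  rw [main]
  cases n with
  | zero =>
    rw [if_pos rfl, hG]
    simp only [Nat.sub_self, Nat.cast_zero, add_zero]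
    rw [hsbF 0 (k-1)]
    have hb0 : bbp (k-1) 0 (fun _ => 1) = bb (k-1) := by
      simp [bbp, wb]
    rw [pow_zero, one_smul, hb0]
    exact rel_smul k
  | succ m =>
    rw [if_neg (Nat.succ_ne_zero m), hG]
    simp only [Nat.sub_self, Nat.cast_zero, add_zero]
    rw [hsbF (m+1) (k-1)]
    rw [smul_comm (ι ℤ (b k)) ((-1:ℤ)^(m+1))]
    unfold bbp
    rw [smul_smul]
    have hw : wb (k-1) (m+1) (fun _ => 1)
        = ι ℤ (b k) * (List.ofFn fun k' : Fin m =>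
            ι ℤ (b ((k-1) - ((k'.succ : ℕ) : ℕ) + 1))).prod := by
      unfold wb
      rw [List.ofFn_succ, List.prod_cons]
      norm_num
    rw [hw, ← mul_assoc, ι_sq_zero, zero_mul, zero_smul, smul_zero]

private lemma minus_bb {smF sbmF : ℕ → Module.End ℤ F}
    (hsmF : ∀ (n : ℕ) (k : ℤ), smF n (bb k) = if n = 0 then bb k else 0)
    (hsbmF : ∀ (n : ℕ) (k : ℤ), sbmF n (bb k) = if n = 0 then bb k else 0)
    (k : ℤ) (n : ℕ) :
    ∑ j ∈ Finset.range (n+1), sbmF j (smF (n-j) (bb k)) = if n = 0 then bb k else 0 := by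
  rw [Finset.sum_eq_single n]
  · rw [Nat.sub_self, hsmF 0 k, if_pos rfl, hsbmF n k]
  · intro j hj hne
    simp only [Finset.mem_range] at hj
    rw [hsmF (n-j) k, if_neg (by omega), map_zero]
  · intro h
    exact absurd (Finset.self_mem_range_succ n) h

/-- On each charge-`m` Fock space, `σ̄₊(z)σ₊(z) = id` and `σ̄₋(z)σ₋(z) = id`
(Cauchy-productwise in `End(F_m)[[z^{±1}]]`). -/
theorem stmt12
    (sA sbA smA sbmA : ℕ → Module.End ℤ A)
    (hsA : IsSigmaPlus sA) (hsbA : IsSigmaBarPlus sbA)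
    (hsmA : IsSigmaMinus smA) (hsbmA : IsSigmaBarMinus sbmA)
    (sF sbF smF sbmF : ℕ → Module.End ℤ F)
    (h₁ : MultOver sA sF) (h₂ : MultOver sbA sbF)
    (h₃ : MultOver smA smF) (h₄ : MultOver sbmA sbmF)
    (hsF : ∀ (n : ℕ) (k : ℤ), sF n (bb k) = ι ℤ (b (k + n)) • bb (k - 1))
    (hsbF : ∀ (n : ℕ) (k : ℤ), sbF n (bb k) = ((-1 : ℤ) ^ n) • bbp k n fun _ => 1)
    (hsmF : ∀ (n : ℕ) (k : ℤ), smF n (bb k) = if n = 0 then bb k else 0)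
    (hsbmF : ∀ (n : ℕ) (k : ℤ), sbmF n (bb k) = if n = 0 then bb k else 0) :
    ∀ (m : ℤ) (f : F), f ∈ Fm m → ∀ n : ℕ,
      (∑ j ∈ Finset.range (n + 1), sbF j (sF (n - j) f)) = (if n = 0 then f else 0) ∧
      (∑ j ∈ Finset.range (n + 1), sbmF j (smF (n - j) f)) = (if n = 0 then f else 0) := by
  obtain ⟨hsA_hs, hsA0, hsA_gen⟩ := hsA
  obtain ⟨hsbA_hs, hsbA0, hsbA1, hsbA2⟩ := hsbA
  obtain ⟨hsmA_hs, hsmA0, hsmA_gen⟩ := hsmA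
  obtain ⟨hsbmA_hs, hsbmA0, hsbmA1, hsbmA2⟩ := hsbmA
  -- vanishing of the composite on generators, plus case
  have genp : ∀ n : ℕ, 1 ≤ n → ∀ i : ℤ,
      ∑ j ∈ Finset.range (n+1), sbA j (sA (n-j) (ι ℤ (b i))) = 0 := by
    intro n hn i
    obtain ⟨m, rfl⟩ : ∃ m, n = m + 1 := ⟨n - 1, by omega⟩
    rw [Finset.sum_range_succ', Finset.sum_range_succ']
    have hz : ∀ j ∈ Finset.range m,
        sbA (j+1+1) (sA (m+1-(j+1+1)) (ι ℤ (b i))) = 0 := by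
      intro j _
      rw [hsA_gen, hsbA2 _ (by omega)]
    rw [Finset.sum_eq_zero hz, zero_add, hsA_gen, hsA_gen, hsbA1, hsbA0]
    simp only [Module.End.one_apply, Nat.sub_zero]
    have : i + ((m+1-(0+1) : ℕ) : ℤ) + 1 = i + ((m+1 : ℕ) : ℤ) := by omega
    rw [this, neg_add_cancel]
  have genm : ∀ n : ℕ, 1 ≤ n → ∀ i : ℤ,
      ∑ j ∈ Finset.range (n+1), sbmA j (smA (n-j) (ι ℤ (b i))) = 0 := by
    intro n hn i
    obtain ⟨m, rfl⟩ : ∃ m, n = m + 1 := ⟨n - 1, by omega⟩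
    rw [Finset.sum_range_succ', Finset.sum_range_succ']
    have hz : ∀ j ∈ Finset.range m,
        sbmA (j+1+1) (smA (m+1-(j+1+1)) (ι ℤ (b i))) = 0 := by
      intro j _
      rw [hsmA_gen, hsbmA2 _ (by omega)]
    rw [Finset.sum_eq_zero hz, zero_add, hsmA_gen, hsmA_gen, hsbmA1, hsbmA0]
    simp only [Module.End.one_apply, Nat.sub_zero]
    have : i - ((m+1-(0+1) : ℕ) : ℤ) - 1 = i - ((m+1 : ℕ) : ℤ) := by omega
    rw [this, neg_add_cancel]
  have vanp := comp_vanish hsA_hs hsbA_hs hsA0 hsbA0 genp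
  have vanm := comp_vanish hsmA_hs hsbmA_hs hsmA0 hsbmA0 genm
  have pbb := plus_bb ⟨hsA_hs, hsA0, hsA_gen⟩ ⟨hsbA_hs, hsbA0, hsbA1, hsbA2⟩ h₂ hsF hsbF
  have mbb := minus_bb hsmF hsbmF
  intro m f hf
  induction hf using Submodule.span_induction with
  | mem x hx =>
    obtain ⟨r, lam, _, rfl⟩ := hx
    intro n
    constructor
    · rw [show bbp m r lam = wb m r lam • bb (m - r) from rfl,
        multover_comp h₁ h₂ vanp hsA0 hsbA0, pbb (m - r) n]
      by_cases hn : n = 0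
      · subst hn; simp only [if_pos rfl]; rfl
      · rw [if_neg hn, if_neg hn, smul_zero]
    · rw [show bbp m r lam = wb m r lam • bb (m - r) from rfl,
        multover_comp h₃ h₄ vanm hsmA0 hsbmA0, mbb (m - r) n]
      by_cases hn : n = 0
      · subst hn; simp only [if_pos rfl]; rfl
      · rw [if_neg hn, if_neg hn, smul_zero]
  | zero =>
    intro n
    constructor <;>
    · rw [Finset.sum_eq_zero fun j _ => by rw [map_zero, map_zero]]
      by_cases hn : n = 0 <;> simp [hn]
  | add x y hx hy ihx ihy =>
    intro n
    constructor
    · have : ∀ j ∈ Finset.range (n+1), sbF j (sF (n-j) (x + y))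
          = sbF j (sF (n-j) x) + sbF j (sF (n-j) y) := fun j _ => by
        rw [map_add, map_add]
      rw [Finset.sum_congr rfl this, Finset.sum_add_distrib, (ihx n).1, (ihy n).1]
      by_cases hn : n = 0 <;> simp [hn]
    · have : ∀ j ∈ Finset.range (n+1), sbmF j (smF (n-j) (x + y))
          = sbmF j (smF (n-j) x) + sbmF j (smF (n-j) y) := fun j _ => by
        rw [map_add, map_add]
      rw [Finset.sum_congr rfl this, Finset.sum_add_distrib, (ihx n).2, (ihy n).2]
      by_cases hn : n = 0 <;> simp [hn]
  | smul a x hx ihx =>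
    intro n
    constructor
    · have : ∀ j ∈ Finset.range (n+1), sbF j (sF (n-j) (a • x))
          = a • sbF j (sF (n-j) x) := fun j _ => by
        rw [map_smul, map_smul]
      rw [Finset.sum_congr rfl this, ← Finset.smul_sum, (ihx n).1]
      by_cases hn : n = 0 <;> simp [hn]
    · have : ∀ j ∈ Finset.range (n+1), sbmF j (smF (n-j) (a • x))
          = a • sbmF j (smF (n-j) x) := fun j _ => by
        rw [map_smul, map_smul]
      rw [Finset.sum_congr rfl this, ← Finset.smul_sum, (ihx n).2]
      by_cases hn : n = 0 <;> simp [hn]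
end
end

section
/- On the fermionic Fock space F, the extended Schubert derivations satisfy the commutation rule σ_-(w)σ_+(z) = (Σ_{k≥0}(z/w)^k) · σ_+(z)σ_-(w), i.e. σ_-(w)σ_+(z) = i_{w,z} (w/(w−z)) σ_+(z)σ_-(w), where i_{w,z} denotes expansion as a power series in z/w. Consequently σ̄_-(z)σ̄_+(w) = i_{z,w}(z/(z−w)) σ̄_+(w)σ̄_-(z). -/
open ExteriorAlgebra

noncomputable section

section Aux

lemma mk_tmul (u : A) (m : ℤ) :
    (Submodule.Quotient.mk (u ⊗ₜ[ℤ] v m) : F) = u • bb m := by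
  rw [bb, ← Submodule.Quotient.mk_smul, TensorProduct.smul_tmul', smul_eq_mul, mul_one]

lemma bb_rel (m : ℤ) : ι ℤ (b m) • bb (m - 1) = bb m := by
  rw [← mk_tmul, bb, Submodule.Quotient.eq]
  exact Submodule.subset_span ⟨m, Or.inl rfl⟩

lemma bb_zero (m : ℤ) : ι ℤ (b m) • bb m = 0 := by
  rw [← mk_tmul, Submodule.Quotient.mk_eq_zero]
  exact Submodule.subset_span ⟨m, Or.inr rfl⟩

lemma ι_anticomm (x y : M) : ι ℤ x * ι ℤ y = -(ι ℤ y * ι ℤ x) :=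
  eq_neg_of_add_eq_zero_left (ExteriorAlgebra.ι_add_mul_swap x y)

lemma smul_bb_aux : ∀ (n : ℕ) (t m : ℤ), t ≤ m → m - t = n → ι ℤ (b t) • bb m = 0 := by
  intro n
  induction n with
  | zero =>
    intro t m _ h
    have : t = m := by omega
    subst this; exact bb_zero t
  | succ k ih =>
    intro t m _ h
    have h1 : t ≤ m - 1 := by omega
    rw [← bb_rel m, smul_smul, ι_anticomm, neg_smul, ← smul_smul,
      ih t (m - 1) h1 (by omega), smul_zero, neg_zero]

lemma smul_bb_eq_zero {t m : ℤ} (h : t ≤ m) : ι ℤ (b t) • bb m = 0 :=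
  smul_bb_aux (m - t).toNat t m h (by omega)

end Aux
section Aux2

lemma hs_one_s19 {D : ℕ → Module.End ℤ A} (hD : IsHS D) (h0 : D 0 = 1) :
    ∀ n : ℕ, D n 1 = if n = 0 then 1 else 0 := by
  intro n
  induction n using Nat.strong_induction_on with
  | _ n ih =>
    match n with
    | 0 => simp [h0]
    | Nat.succ k =>
      have h := hD (k + 1) 1 1
      rw [one_mul, Finset.sum_range_succ, Finset.sum_eq_single_of_mem 0
        (Finset.mem_range.mpr (Nat.succ_pos k))
        (by
          intro j hj hj0
          have hj' := Finset.mem_range.mp hj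
          rw [ih j (by omega), if_neg hj0, zero_mul])] at h
      simp only [Nat.sub_zero, Nat.sub_self, h0, Module.End.one_apply, one_mul, mul_one] at h
      have h2 : D (k + 1) 1 = 0 := left_eq_add.mp h
      simpa using h2

lemma hs_comm {D E : ℕ → Module.End ℤ A} (hD : IsHS D) (hE : IsHS E)
    (hD0 : D 0 = 1) (hE0 : E 0 = 1)
    (hgen : ∀ (a c : ℕ) (j : ℤ), D c (E a (ι ℤ (b j))) = E a (D c (ι ℤ (b j)))) :
    ∀ (a c : ℕ) (x : A), D c (E a x) = E a (D c x) := by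
  have key : ∀ x : A, ∀ a c : ℕ, D c (E a x) = E a (D c x) := by
    intro x
    induction x using ExteriorAlgebra.induction with
    | algebraMap r =>
      intro a c
      rw [Algebra.algebraMap_eq_smul_one, map_smul, map_smul, map_smul, map_smul,
        hs_one_s19 hE hE0 a, hs_one_s19 hD hD0 c]
      by_cases ha : a = 0 <;> by_cases hc : c = 0 <;>
        simp [ha, hc, hs_one_s19 hE hE0, hs_one_s19 hD hD0]
    | ι x =>
      induction x using Finsupp.induction_linear with
      | zero => intro a c; simp
      | add f g hf hg =>
        intro a c
        rw [map_add, map_add, map_add, map_add, map_add, hf a c, hg a c]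
      | single i r =>
        intro a c
        have hx : (Finsupp.single i r : M) = r • b i := by
          rw [b, Finsupp.smul_single, smul_eq_mul, mul_one]
        rw [hx, map_smul, map_smul, map_smul, map_smul, map_smul, hgen a c i]
    | add x y hx hy =>
      intro a c
      rw [map_add, map_add, map_add, map_add, hx a c, hy a c]
    | mul x y hx hy =>
      intro a c
      calc D c (E a (x * y))
          = ∑ j ∈ Finset.range (a + 1), ∑ i ∈ Finset.range (c + 1),
              E j (D i x) * E (a - j) (D (c - i) y) := by
            rw [hE a x y, map_sum]
            refine Finset.sum_congr rfl fun j _ => ?_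
            rw [hD c (E j x) (E (a - j) y)]
            exact Finset.sum_congr rfl fun i _ => by rw [hx j i, hy (a - j) (c - i)]
        _ = E a (D c (x * y)) := by
            rw [hD c x y, map_sum]
            refine Finset.sum_comm.trans ?_
            exact Finset.sum_congr rfl fun i _ => (hE a (D i x) (D (c - i) y)).symm
  intro a c x; exact key x a c

lemma ext_F (f g : Module.End ℤ F)
    (h : ∀ (u : A) (m : ℤ), f (u • bb m) = g (u • bb m)) : f = g := by
  refine LinearMap.ext fun x => ?_
  obtain ⟨y, rfl⟩ := Submodule.Quotient.mk_surjective W x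
  induction y using TensorProduct.induction_on with
  | zero => simp
  | tmul u w =>
    induction w using Finsupp.induction_linear with
    | zero => rw [TensorProduct.tmul_zero]; simp
    | add w1 w2 h1 h2 =>
      rw [TensorProduct.tmul_add, Submodule.Quotient.mk_add, map_add, map_add, h1, h2]
    | single i r =>
      have hv : (Finsupp.single i r : V) = (r : ℤ) • v i := by
        rw [v, Finsupp.smul_single, smul_eq_mul, mul_one]
      have hmk : (Submodule.Quotient.mk (u ⊗ₜ[ℤ] Finsupp.single i r) : F)
          = (r : ℤ) • (u • bb i) := by
        rw [hv, TensorProduct.tmul_smul, Submodule.Quotient.mk_smul, mk_tmul]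
      rw [hmk, LinearMap.map_smul, LinearMap.map_smul, h u i]
  | add y1 y2 h1 h2 =>
    rw [Submodule.Quotient.mk_add, map_add, map_add, h1, h2]

lemma collapse {nA : ℕ → Module.End ℤ A} {NF : ℕ → Module.End ℤ F}
    (h : MultOver nA NF) (hN : ∀ (n : ℕ) (k : ℤ), NF n (bb k) = if n = 0 then bb k else 0)
    (n : ℕ) (u : A) (k : ℤ) : NF n (u • bb k) = nA n u • bb k := by
  rw [h n u (bb k), Finset.sum_eq_single_of_mem n (Finset.mem_range.mpr (Nat.lt_succ_self n))]
  · rw [Nat.sub_self, hN 0 k, if_pos rfl]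
  · intro j hj hjn
    have hj' := Finset.mem_range.mp hj
    rw [hN (n - j) k, if_neg (by omega), smul_zero]

lemma comb {β : Type*} [AddCommMonoid β] (a c : ℕ) (t : ℕ → ℕ → β) :
    (∑ j ∈ Finset.range (a + 1), ∑ i ∈ Finset.range (c + 1),
      (if c - i ≤ a - j then t j (c - i) else 0))
    = ∑ k ∈ Finset.range (min a c + 1), ∑ j ∈ Finset.range (a - k + 1), t j k := by
  have step1 : (∑ j ∈ Finset.range (a + 1), ∑ i ∈ Finset.range (c + 1),
      (if c - i ≤ a - j then t j (c - i) else 0))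
      = ∑ k ∈ Finset.range (c + 1), ∑ j ∈ Finset.range (a + 1),
        (if k ≤ a - j then t j k else 0) := by
    rw [Finset.sum_comm,
      ← Finset.sum_range_reflect (fun k => ∑ j ∈ Finset.range (a + 1),
        (if k ≤ a - j then t j k else 0)) (c + 1)]
    refine Finset.sum_congr rfl fun i hi => ?_
    have : c + 1 - 1 - i = c - i := by omega
    rw [this]
  rw [step1]
  rw [← Finset.sum_subset (Finset.range_subset_range.mpr (by omega : min a c + 1 ≤ c + 1))
    (by
      intro k hk hk'
      have h1 := Finset.mem_range.mp hk
      have h2 : min a c < k := by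
        by_contra hc2
        exact hk' (Finset.mem_range.mpr (by omega))
      refine Finset.sum_eq_zero fun j hj => ?_
      rw [if_neg (by omega)])]
  refine Finset.sum_congr rfl fun k hk => ?_
  have hk' := Finset.mem_range.mp hk
  rw [← Finset.sum_subset (Finset.range_subset_range.mpr (by omega : a - k + 1 ≤ a + 1))
    (by
      intro j hj hj'
      have h1 := Finset.mem_range.mp hj
      have h2 : a - k < j := by
        by_contra hc2
        exact hj' (Finset.mem_range.mpr (by omega))
      rw [if_neg (by omega)])]
  refine Finset.sum_congr rfl fun j hj => ?_
  have hj' := Finset.mem_range.mp hj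
  rw [if_pos (by omega)]

end Aux2
section Aux3

lemma wb_nil (m : ℤ) (lam : Fin 0 → ℕ) : wb m 0 lam = 1 := by
  simp [wb]

lemma wb_succ (m : ℤ) (r : ℕ) (lam : Fin (r + 1) → ℕ) :
    wb m (r + 1) lam
      = wb m r (fun k => lam k.castSucc) * ι ℤ (b (m - r + lam (Fin.last r))) := by
  rw [wb, List.ofFn_succ', List.prod_concat, wb]
  rfl

lemma wb_one_succ (m : ℤ) (r : ℕ) :
    wb m (r + 1) (fun _ => 1) = wb m r (fun _ => 1) * ι ℤ (b (m - r + 1)) := by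
  rw [wb_succ]; norm_num

lemma wb_zero_succ (m : ℤ) (r : ℕ) :
    wb m (r + 1) (fun _ => 0) = wb m r (fun _ => 0) * ι ℤ (b (m - r)) := by
  rw [wb_succ]; norm_num

lemma absorb (s : ℕ) : ∀ p : ℤ, wb p s (fun _ => 0) • bb (p - s) = bb p := by
  induction s with
  | zero =>
    intro p
    rw [wb_nil]
    simp
  | succ k ih =>
    intro p
    rw [wb_zero_succ, mul_smul,
      show (p - ((k + 1 : ℕ) : ℤ)) = (p - (k : ℕ)) - 1 by push_cast; ring,
      bb_rel, ih p]

lemma barminus_mul_gen {D : ℕ → Module.End ℤ A} (hD : IsSigmaBarMinus D)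
    (s : ℕ) (x : A) (t : ℤ) :
    D s (x * ι ℤ (b t))
      = D s x * ι ℤ (b t) - (if s = 0 then 0 else D (s - 1) x * ι ℤ (b (t - 1))) := by
  obtain ⟨hHS, h0, h1, h2⟩ := hD
  match s with
  | 0 =>
    rw [hHS 0, Finset.sum_range_one]
    simp [h0]
  | Nat.succ k =>
    rw [hHS (k + 1) x (ι ℤ (b t)), Finset.sum_range_succ, Finset.sum_range_succ,
      Finset.sum_eq_zero (fun j hj => by
        have := Finset.mem_range.mp hj
        rw [h2 (k + 1 - j) (by omega) t, mul_zero]),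
      zero_add, show k + 1 - k = 1 from by omega, h1 t, Nat.sub_self, h0]
    simp only [Module.End.one_apply, mul_neg, Nat.succ_ne_zero, if_neg, Nat.add_sub_cancel]
    abel_nf
    rw [add_comm]

lemma sbmA_wb {D : ℕ → Module.End ℤ A} (hD : IsSigmaBarMinus D) :
    ∀ (r s : ℕ) (m : ℤ), D s (wb m r (fun _ => 1)) =
      if s ≤ r then ((-1 : ℤ) ^ s) •
        (wb m (r - s) (fun _ => 1) * wb (m - ((r - s : ℕ) : ℤ)) s (fun _ => 0))
      else 0 := by
  intro r
  induction r with
  | zero =>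
    intro s m
    match s with
    | 0 =>
      rw [if_pos le_rfl, hD.2.1]
      simp [wb_nil]
    | Nat.succ k =>
      rw [if_neg (by omega), wb_nil, hs_one_s19 hD.1 hD.2.1, if_neg (Nat.succ_ne_zero k)]
  | succ r ih =>
    intro s m
    rw [wb_one_succ, barminus_mul_gen hD s _ (m - r + 1)]
    match s with
    | 0 =>
      rw [if_pos rfl, sub_zero, hD.2.1]
      simp only [Module.End.one_apply, pow_zero, one_smul, Nat.sub_zero]
      rw [wb_nil, mul_one, wb_one_succ, if_pos (Nat.zero_le _)]
    | Nat.succ k =>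
      have hfirst : D (k + 1) (wb m r (fun _ => 1)) * ι ℤ (b (m - r + 1)) = 0 := by
        rcases le_or_gt (k + 1) r with hle | hlt
        · rw [ih (k + 1) m, if_pos hle]
          have hz : wb (m - ((r - (k + 1) : ℕ) : ℤ)) (k + 1) (fun _ => 0)
              * ι ℤ (b (m - r + 1)) = 0 := by
            rw [wb_zero_succ,
              show (m - ((r - (k + 1) : ℕ) : ℤ) - (k : ℕ)) = m - r + 1 from by omega,
              mul_assoc, ι_sq_zero, mul_zero]
          rw [smul_mul_assoc, mul_assoc, hz, mul_zero, smul_zero]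
        · rw [ih (k + 1) m, if_neg (by omega), zero_mul]
      rw [hfirst, zero_sub, if_neg (Nat.succ_ne_zero k), Nat.succ_sub_one,
        show (m - (r : ℤ) + 1 - 1) = m - r from by ring]
      rcases le_or_gt k r with hle | hlt
      · rw [ih k m, if_pos hle, if_pos (by omega),
          show r + 1 - (k + 1) = r - k from by omega,
          wb_zero_succ (m - ((r - k : ℕ) : ℤ)) k,
          show (m - ((r - k : ℕ) : ℤ) - (k : ℕ)) = m - r from by omega,
          show ((-1 : ℤ)) ^ (k + 1) = -((-1 : ℤ) ^ k) from by ring,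
          neg_smul, smul_mul_assoc, ← mul_assoc]
      · rw [ih k m, if_neg (by omega), if_neg (by omega), zero_mul, neg_zero]

end Aux3
section Aux4

lemma base_unbarred {smA : ℕ → Module.End ℤ A} {sF smF : ℕ → Module.End ℤ F}
    (hsmA : IsSigmaMinus smA) (h₃ : MultOver smA smF)
    (hsF : ∀ (n : ℕ) (k : ℤ), sF n (bb k) = ι ℤ (b (k + n)) • bb (k - 1))
    (hsmF : ∀ (n : ℕ) (k : ℤ), smF n (bb k) = if n = 0 then bb k else 0) :
    ∀ (s r : ℕ) (m : ℤ), smF s (sF r (bb m)) = if s ≤ r then sF (r - s) (bb m) else 0 := by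
  intro s r m
  rw [hsF r m, collapse h₃ hsmF s _ (m - 1), hsmA.2.2 s (m + r)]
  rcases le_or_gt s r with h | h
  · rw [if_pos h, hsF (r - s) m,
      show (m + (r : ℤ) - s) = m + ((r - s : ℕ) : ℤ) from by omega]
  · rw [if_neg (by omega), smul_bb_eq_zero (by omega : m + (r : ℤ) - s ≤ m - 1)]

lemma neg_one_pow_helper {r s : ℕ} (h : s ≤ r) :
    ((-1 : ℤ)) ^ r * (-1) ^ s = (-1) ^ (r - s) := by
  have h2 : r = (r - s) + s := by omega
  calc ((-1 : ℤ)) ^ r * (-1) ^ s = (-1) ^ ((r - s) + s) * (-1) ^ s := by rw [← h2]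
    _ = (-1) ^ (r - s) * ((-1) ^ s * (-1) ^ s) := by rw [pow_add]; ring
    _ = (-1) ^ (r - s) := by
        rw [← pow_add, Even.neg_one_pow ⟨s, rfl⟩, mul_one]

lemma base_barred {sbmA : ℕ → Module.End ℤ A} {sbpF sbmF : ℕ → Module.End ℤ F}
    (hsbmA : IsSigmaBarMinus sbmA) (h₄ : MultOver sbmA sbmF)
    (hsbpF : ∀ (n : ℕ) (k : ℤ), sbpF n (bb k) = ((-1 : ℤ) ^ n) • bbp k n fun _ => 1)
    (hsbmF : ∀ (n : ℕ) (k : ℤ), sbmF n (bb k) = if n = 0 then bb k else 0) :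
    ∀ (s r : ℕ) (m : ℤ), sbmF s (sbpF r (bb m)) = if s ≤ r then sbpF (r - s) (bb m) else 0 := by
  intro s r m
  rw [hsbpF r m, bbp, LinearMap.map_smul, collapse h₄ hsbmF s _ (m - r),
    sbmA_wb hsbmA r s m]
  rcases le_or_gt s r with h | h
  · rw [if_pos h, if_pos h, hsbpF (r - s) m, bbp, smul_assoc, mul_smul,
      show (m - (r : ℤ)) = (m - ((r - s : ℕ) : ℤ)) - (s : ℕ) from by omega,
      absorb s (m - ((r - s : ℕ) : ℤ)), smul_smul, neg_one_pow_helper h]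
  · rw [if_neg (by omega), if_neg (by omega), zero_smul, smul_zero]

lemma comm_unbarred {sA smA : ℕ → Module.End ℤ A}
    (hsA : IsSigmaPlus sA) (hsmA : IsSigmaMinus smA) :
    ∀ (i j : ℕ) (x : A), smA i (sA j x) = sA j (smA i x) := by
  intro i j x
  refine hs_comm hsmA.1 hsA.1 hsmA.2.1 hsA.2.1 (fun a c t => ?_) j i x
  rw [hsA.2.2 a t, hsmA.2.2 c (t + a), hsmA.2.2 c t, hsA.2.2 a (t - c),
    show (t + (a : ℤ) - c) = t - c + a from by ring]

lemma comm_barred {sbpA sbmA : ℕ → Module.End ℤ A}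
    (hsbpA : IsSigmaBarPlus sbpA) (hsbmA : IsSigmaBarMinus sbmA) :
    ∀ (i j : ℕ) (x : A), sbmA i (sbpA j x) = sbpA j (sbmA i x) := by
  intro i j x
  obtain ⟨pHS, p0, p1, p2⟩ := hsbpA
  obtain ⟨mHS, m0, m1, m2⟩ := hsbmA
  refine hs_comm mHS pHS m0 p0 (fun a c t => ?_) j i x
  match a, c with
  | 0, c => simp [p0]
  | Nat.succ a', 0 => simp [m0]
  | 1, 1 =>
    rw [p1 t, map_neg, m1 (t + 1), neg_neg, m1 t, map_neg, p1 (t - 1), neg_neg,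
      show (t + 1 - 1 : ℤ) = t - 1 + 1 from by ring]
  | 1, Nat.succ (Nat.succ c') =>
    rw [p1 t, map_neg, m2 (c' + 2) (by omega) (t + 1), neg_zero,
      m2 (c' + 2) (by omega) t, map_zero]
  | Nat.succ (Nat.succ a'), 1 =>
    rw [p2 (a' + 2) (by omega) t, map_zero, m1 t, map_neg,
      p2 (a' + 2) (by omega) (t - 1), neg_zero]
  | Nat.succ (Nat.succ a'), Nat.succ (Nat.succ c') =>
    rw [p2 (a' + 2) (by omega) t, map_zero, m2 (c' + 2) (by omega) t, map_zero]

lemma main_lemma {pA nA : ℕ → Module.End ℤ A} {PF NF : ℕ → Module.End ℤ F}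
    (hP : MultOver pA PF) (hN : MultOver nA NF)
    (hNbb : ∀ (n : ℕ) (k : ℤ), NF n (bb k) = if n = 0 then bb k else 0)
    (hcomm : ∀ (i j : ℕ) (x : A), nA i (pA j x) = pA j (nA i x))
    (hbase : ∀ (s r : ℕ) (m : ℤ), NF s (PF r (bb m)) = if s ≤ r then PF (r - s) (bb m) else 0)
    (a c : ℕ) :
    NF c * PF a = ∑ k ∈ Finset.range (min a c + 1), PF (a - k) * NF (c - k) := by
  apply ext_F
  intro u m
  have hL : (NF c * PF a) (u • bb m)
      = ∑ j ∈ Finset.range (a + 1), ∑ i ∈ Finset.range (c + 1),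
          (if c - i ≤ a - j then
            (pA j (nA (c - (c - i)) u)) • PF ((a - (c - i)) - j) (bb m) else 0) := by
    rw [Module.End.mul_apply, hP a u (bb m), map_sum]
    refine Finset.sum_congr rfl fun j hj => ?_
    rw [hN c (pA j u) (PF (a - j) (bb m))]
    refine Finset.sum_congr rfl fun i hi => ?_
    have hi' := Finset.mem_range.mp hi
    rw [hcomm i j u, hbase (c - i) (a - j) m]
    split_ifs with hc
    · rw [show c - (c - i) = i from by omega,
        show a - (c - i) - j = a - j - (c - i) from by omega]
    · exact smul_zero _
  have hR : (∑ k ∈ Finset.range (min a c + 1), PF (a - k) * NF (c - k)) (u • bb m)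
      = ∑ k ∈ Finset.range (min a c + 1), ∑ j ∈ Finset.range (a - k + 1),
          (pA j (nA (c - k) u)) • PF ((a - k) - j) (bb m) := by
    rw [LinearMap.sum_apply]
    refine Finset.sum_congr rfl fun k hk => ?_
    rw [Module.End.mul_apply, collapse hN hNbb (c - k) u m, hP (a - k) (nA (c - k) u) (bb m)]
  rw [hL, hR]
  exact comb a c (fun j k => (pA j (nA (c - k) u)) • PF ((a - k) - j) (bb m))

end Aux4

/-- Commutation rules on the Fock space:
`σ₋(w)σ₊(z) = i_{w,z}(w/(w−z)) σ₊(z)σ₋(w)` and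
`σ̄₋(z)σ̄₊(w) = i_{z,w}(z/(z−w)) σ̄₊(w)σ̄₋(z)`, stated coefficientwise: the coefficient
of `z^a w^{−c}` (resp. `z^{−c} w^a`) of the right-hand side is
`∑_{k=0}^{min a c} σ_{a−k} σ_{−(c−k)}` (resp. the barred analogue). -/
theorem stmt19
    (sA sbpA smA sbmA : ℕ → Module.End ℤ A)
    (hsA : IsSigmaPlus sA) (hsbpA : IsSigmaBarPlus sbpA)
    (hsmA : IsSigmaMinus smA) (hsbmA : IsSigmaBarMinus sbmA)
    (sF sbpF smF sbmF : ℕ → Module.End ℤ F)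
    (h₁ : MultOver sA sF) (h₂ : MultOver sbpA sbpF)
    (h₃ : MultOver smA smF) (h₄ : MultOver sbmA sbmF)
    (hsF : ∀ (n : ℕ) (k : ℤ), sF n (bb k) = ι ℤ (b (k + n)) • bb (k - 1))
    (hsbpF : ∀ (n : ℕ) (k : ℤ), sbpF n (bb k) = ((-1 : ℤ) ^ n) • bbp k n fun _ => 1)
    (hsmF : ∀ (n : ℕ) (k : ℤ), smF n (bb k) = if n = 0 then bb k else 0)
    (hsbmF : ∀ (n : ℕ) (k : ℤ), sbmF n (bb k) = if n = 0 then bb k else 0) :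
    (∀ a c : ℕ, smF c * sF a =
      ∑ k ∈ Finset.range (min a c + 1), sF (a - k) * smF (c - k)) ∧
    (∀ a c : ℕ, sbmF c * sbpF a =
      ∑ k ∈ Finset.range (min a c + 1), sbpF (a - k) * sbmF (c - k)) := by
  constructor
  · intro a c
    exact main_lemma h₁ h₃ hsmF (comm_unbarred hsA hsmA)
      (base_unbarred hsmA h₃ hsF hsmF) a c
  · intro a c
    exact main_lemma h₂ h₄ hsbmF (comm_barred hsbpA hsbmA)
      (base_barred hsbmA h₄ hsbpF hsbmF) a c
end
end
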